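/- If the diversity-based algorithm is run with k = 1 (so R_0 = ∅), the extracted explanation tree maximizes the total number of rule vertices; i.e., selecting maximal-weight children under W_{T,∅} (atom vertex: max of children; rule vertex: 1 + sum of children) yields a longest explanation. -/

import Mathlib

/-- A ground normal rule: head atom, positive body atoms, negative body atoms. -/
structure Rule (α : Type) where
  head : α
  pos : Finset α
  neg : Finset α

/-- Finite rose trees with vertex labels in `L`; a vertex of a tree is identified
with the subtree hanging from it. -/
inductive RTree (L : Type) : Type
  | node : L → List (RTree L) → RTree L

namespace RTree

def label {L : Type} : RTree L → L
  | node l _ => l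

def children {L : Type} : RTree L → List (RTree L)
  | node _ cs => cs

/-- The list of all vertices (subtree occurrences) of a tree. -/
def occs {L : Type} : RTree L → List (RTree L)
  | node l cs => node l cs :: (cs.attach.map (fun c => occs c.1)).flatten
decreasing_by
  have := List.sizeOf_lt_of_mem c.2
  simp only [RTree.node.sizeOf_spec]; omega

end RTree

/-- Rule `r` supports atom `p` using atoms in `X` but not in `Z`:
`H(r) = p`, `B⁺(r) ⊆ X \ Z` and `B⁻(r) ∩ X = ∅`. -/
def Supports {α : Type} (X Z : Set α) (r : Rule α) (p : α) : Prop :=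
  r.head = p ∧ ↑r.pos ⊆ X \ Z ∧ ∀ a ∈ r.neg, a ∉ X

/-- `IsAOTNode P X Z t`: `t` is (a node of) the and-or explanation tree w.r.t.
program `P` and answer set `X`, where `Z` is the set of atoms labeling the
ancestor atom vertices.  An atom vertex labeled `p` has one rule-vertex child for
each rule of `P` supporting `p` using atoms in `X` but not in `insert p Z` (and
only such children), and has at least one child (so that every leaf is a rule
vertex); a rule vertex labeled `r` has one atom-vertex child for each atom of
`B⁺(r)` (and only such children). -/
inductive IsAOTNode {α : Type} (P : Set (Rule α)) (X : Set α) :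
    Set α → RTree (α ⊕ Rule α) → Prop
  | atom {Z : Set α} {p : α} {cs : List (RTree (α ⊕ Rule α))}
      (hp : p ∈ X) (hne : cs ≠ [])
      (hcomplete : ∀ r ∈ P, Supports X (insert p Z) r p →
        ∃ c ∈ cs, RTree.label c = Sum.inr r)
      (hsound : ∀ c ∈ cs,
        ∃ r ∈ P, Supports X (insert p Z) r p ∧ RTree.label c = Sum.inr r)
      (hrec : ∀ c ∈ cs, IsAOTNode P X (insert p Z) c) :
      IsAOTNode P X Z (.node (.inl p) cs)
  | rule {Z : Set α} {r : Rule α} {cs : List (RTree (α ⊕ Rule α))}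
      (hcomplete : ∀ a ∈ r.pos, ∃ c ∈ cs, RTree.label c = Sum.inl a)
      (hsound : ∀ c ∈ cs, ∃ a ∈ r.pos, RTree.label c = Sum.inl a)
      (hrec : ∀ c ∈ cs, IsAOTNode P X Z c) :
      IsAOTNode P X Z (.node (.inr r) cs)

open Classical in
/-- The difference weight `W_{T,R}` relative to a set `R` of rule (and-) vertices:
an atom (or-) vertex gets the maximum of its children's weights; a rule (and-)
vertex gets the sum of its children's weights, plus 1 if it does not belong to
`R` and plus 0 if it does. -/
noncomputable def wdiff {α ρ : Type} (R : Set (RTree (α ⊕ ρ))) : RTree (α ⊕ ρ) → ℕ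
  | .node (.inl _) cs => ((cs.attach.map (fun c => wdiff R c.1)).foldr max 0)
  | .node (.inr r) cs => (cs.attach.map (fun c => wdiff R c.1)).sum +
      (if RTree.node (.inr r) cs ∈ R then 0 else 1)
decreasing_by
  all_goals (have := List.sizeOf_lt_of_mem c.2; simp only [RTree.node.sizeOf_spec]; omega)

/-- `Sel T V`: `V` is the set of rule (and-) vertices of some explanation tree
(solution subtree) of the and-or tree `T`: at each atom (or-) vertex one child is
chosen, at each rule vertex all children are kept, and `V` collects the rule
vertices (as vertices of `T`) that are visited. -/
inductive Sel {α ρ : Type} : RTree (α ⊕ ρ) → Set (RTree (α ⊕ ρ)) → Prop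
  | atom {a : α} {cs : List (RTree (α ⊕ ρ))} {c : RTree (α ⊕ ρ)} {V : Set (RTree (α ⊕ ρ))} :
      c ∈ cs → Sel c V → Sel (.node (.inl a) cs) V
  | rule {r : ρ} {cs : List (RTree (α ⊕ ρ))} (f : RTree (α ⊕ ρ) → Set (RTree (α ⊕ ρ)))
      (h : ∀ c ∈ cs, Sel c (f c)) :
      Sel (.node (.inr r) cs) (insert (.node (.inr r) cs) (⋃ c ∈ cs, f c))

/-- `MaxSel R T V`: `V` is the set of rule vertices of the explanation tree
extracted by selecting, at each atom (or-) vertex, a child of maximum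
`wdiff R`-weight, and at each rule vertex all children. -/
inductive MaxSel {α ρ : Type} (R : Set (RTree (α ⊕ ρ))) :
    RTree (α ⊕ ρ) → Set (RTree (α ⊕ ρ)) → Prop
  | atom {a : α} {cs : List (RTree (α ⊕ ρ))} {c : RTree (α ⊕ ρ)} {V : Set (RTree (α ⊕ ρ))} :
      c ∈ cs → (∀ c' ∈ cs, wdiff R c' ≤ wdiff R c) → MaxSel R c V →
      MaxSel R (.node (.inl a) cs) V
  | rule {r : ρ} {cs : List (RTree (α ⊕ ρ))} (f : RTree (α ⊕ ρ) → Set (RTree (α ⊕ ρ)))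
      (h : ∀ c ∈ cs, MaxSel R c (f c)) :
      MaxSel R (.node (.inr r) cs) (insert (.node (.inr r) cs) (⋃ c ∈ cs, f c))

section Aux

open RTree

variable {α ρ : Type}

private lemma occs_node {L : Type} (l : L) (cs : List (RTree L)) :
    occs (node l cs) = node l cs :: (cs.map occs).flatten := by
  rw [occs, List.attach_map_val]

private lemma self_mem_occs {L : Type} (t : RTree L) : t ∈ occs t := by
  cases t with | node l cs => rw [occs_node]; exact List.mem_cons_self

private lemma mem_occs_child {L : Type} {l : L} {cs : List (RTree L)} {c t : RTree L}
    (hc : c ∈ cs) (ht : t ∈ occs c) : t ∈ occs (node l cs) := by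
  rw [occs_node]
  exact List.mem_cons_of_mem _ (List.mem_flatten.mpr ⟨occs c, List.mem_map_of_mem hc, ht⟩)

private lemma wdiff_atom (R : Set (RTree (α ⊕ ρ))) (a : α) (cs : List (RTree (α ⊕ ρ))) :
    wdiff R (.node (.inl a) cs) = (cs.map (wdiff R)).foldr max 0 := by
  rw [wdiff, List.attach_map_val]

private lemma wdiff_rule (r : ρ) (cs : List (RTree (α ⊕ ρ))) :
    wdiff (∅ : Set (RTree (α ⊕ ρ))) (.node (.inr r) cs) = (cs.map (wdiff ∅)).sum + 1 := by
  rw [wdiff, List.attach_map_val]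
  simp

private lemma le_foldr_max {l : List ℕ} {a : ℕ} (h : a ∈ l) : a ≤ l.foldr max 0 := by
  induction l with
  | nil => cases h
  | cons b l ih =>
    rcases List.mem_cons.mp h with rfl | h
    · exact le_max_left _ _
    · exact le_trans (ih h) (le_max_right _ _)

private lemma foldr_max_le {l : List ℕ} {b : ℕ} (h : ∀ x ∈ l, x ≤ b) : l.foldr max 0 ≤ b := by
  induction l with
  | nil => exact Nat.zero_le _
  | cons a l ih =>
    exact max_le (h a (List.mem_cons_self)) (ih fun x hx => h x (List.mem_cons_of_mem _ hx))

private lemma Sel.subset {T : RTree (α ⊕ ρ)} {V : Set (RTree (α ⊕ ρ))} (h : Sel T V) :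
    V ⊆ {t | t ∈ occs T} := by
  induction h with
  | atom hc _ ih => exact fun t ht => mem_occs_child hc (ih ht)
  | @rule r cs f h ih =>
    intro t ht
    rcases Set.mem_insert_iff.mp ht with rfl | ht
    · exact self_mem_occs _
    · obtain ⟨c, hc, ht⟩ := Set.mem_iUnion₂.mp ht
      exact mem_occs_child hc (ih c hc ht)

private lemma Sel.finite {T : RTree (α ⊕ ρ)} {V : Set (RTree (α ⊕ ρ))} (h : Sel T V) :
    V.Finite :=
  (occs T).finite_toSet.subset h.subset

private lemma ncard_biUnion_list {β γ : Type*} : ∀ (cs : List β) (f : β → Set γ),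
    (∀ c ∈ cs, (f c).Finite) →
    List.Pairwise (fun a b => Disjoint (f a) (f b)) cs →
    (⋃ c ∈ cs, f c).ncard = (cs.map fun c => (f c).ncard).sum := by
  intro cs
  induction cs with
  | nil => intro f _ _; simp
  | cons a l ih =>
    intro f hfin hp
    have heq : (⋃ c ∈ (a :: l), f c) = f a ∪ ⋃ c ∈ l, f c := by
      simp only [List.mem_cons, Set.iUnion_iUnion_eq_or_left]
    have hd : Disjoint (f a) (⋃ c ∈ l, f c) := by
      rw [Set.disjoint_left]
      intro t hta htl
      obtain ⟨c, hc, htc⟩ := Set.mem_iUnion₂.mp htl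
      exact Set.disjoint_left.mp (List.rel_of_pairwise_cons hp hc) hta htc
    have hfl : (⋃ c ∈ l, f c).Finite :=
      Set.Finite.biUnion l.finite_toSet (fun c hc => hfin c (List.mem_cons_of_mem _ hc))
    rw [heq, Set.ncard_union_eq hd (hfin a (List.mem_cons_self)) hfl,
      ih f (fun c hc => hfin c (List.mem_cons_of_mem _ hc)) hp.of_cons]
    simp

private lemma nodup_parts {L : Type} {l : L} {cs : List (RTree L)}
    (hnd : (occs (node l cs)).Nodup) :
    (node l cs ∉ (cs.map occs).flatten) ∧ (∀ c ∈ cs, (occs c).Nodup) ∧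
      List.Pairwise (fun a b => List.Disjoint (occs a) (occs b)) cs := by
  rw [occs_node, List.nodup_cons, List.nodup_flatten] at hnd
  exact ⟨hnd.1, fun c hc => hnd.2.1 _ (List.mem_map_of_mem hc),
    List.pairwise_map.mp hnd.2.2⟩

private lemma sel_pairwise_disjoint {cs : List (RTree (α ⊕ ρ))}
    {f : RTree (α ⊕ ρ) → Set (RTree (α ⊕ ρ))}
    (h : ∀ c ∈ cs, Sel c (f c))
    (hpw : List.Pairwise (fun a b => List.Disjoint (occs a) (occs b)) cs) :
    List.Pairwise (fun a b => Disjoint (f a) (f b)) cs := by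
  refine hpw.imp_of_mem ?_
  intro a b ha hb hab
  rw [Set.disjoint_left]
  intro t hta htb
  exact hab ((h a ha).subset hta) ((h b hb).subset htb)

private lemma sel_ncard_le {T : RTree (α ⊕ ρ)} {V : Set (RTree (α ⊕ ρ))} (h : Sel T V) :
    (occs T).Nodup → V.ncard ≤ wdiff (∅ : Set (RTree (α ⊕ ρ))) T := by
  induction h with
  | @atom a cs c V hc hs ih =>
    intro hnd
    have hndc : (occs c).Nodup := (nodup_parts hnd).2.1 c hc
    calc V.ncard ≤ wdiff ∅ c := ih hndc
      _ ≤ _ := by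
          rw [wdiff_atom]; exact le_foldr_max (List.mem_map_of_mem hc)
  | @rule r cs f h ih =>
    intro hnd
    obtain ⟨hroot, hsub, hdisj⟩ := nodup_parts hnd
    have hfin : ∀ c ∈ cs, (f c).Finite := fun c hc => (h c hc).finite
    have hU : (⋃ c ∈ cs, f c).ncard = (cs.map fun c => (f c).ncard).sum :=
      ncard_biUnion_list cs f hfin (sel_pairwise_disjoint h hdisj)
    calc (insert (node (Sum.inr r) cs) (⋃ c ∈ cs, f c)).ncard
        ≤ (⋃ c ∈ cs, f c).ncard + 1 := Set.ncard_insert_le _ _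
      _ ≤ (cs.map (wdiff ∅)).sum + 1 := by
          rw [hU]
          exact Nat.add_le_add_right
            (List.sum_le_sum fun c hc => ih c hc (hsub c hc)) 1
      _ = _ := (wdiff_rule r cs).symm

private lemma maxsel_sel {R : Set (RTree (α ⊕ ρ))} {T : RTree (α ⊕ ρ)}
    {V : Set (RTree (α ⊕ ρ))} (h : MaxSel R T V) : Sel T V := by
  induction h with
  | atom hc _ _ ih => exact .atom hc ih
  | rule f h ih => exact .rule f ih

private lemma maxsel_ncard_eq {T : RTree (α ⊕ ρ)} {V : Set (RTree (α ⊕ ρ))}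
    (h : MaxSel (∅ : Set (RTree (α ⊕ ρ))) T V) :
    (occs T).Nodup → V.ncard = wdiff (∅ : Set (RTree (α ⊕ ρ))) T := by
  induction h with
  | @atom a cs c V hc hmax hm ih =>
    intro hnd
    have hndc : (occs c).Nodup := (nodup_parts hnd).2.1 c hc
    rw [ih hndc, wdiff_atom]
    refine le_antisymm (le_foldr_max (List.mem_map_of_mem hc)) (foldr_max_le ?_)
    intro x hx
    obtain ⟨c', hc', rfl⟩ := List.mem_map.mp hx
    exact hmax c' hc'
  | @rule r cs f h ih =>
    intro hnd
    obtain ⟨hroot, hsub, hdisj⟩ := nodup_parts hnd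
    have hsel : ∀ c ∈ cs, Sel c (f c) := fun c hc => maxsel_sel (h c hc)
    have hfin : ∀ c ∈ cs, (f c).Finite := fun c hc => (hsel c hc).finite
    have hU : (⋃ c ∈ cs, f c).ncard = (cs.map fun c => (f c).ncard).sum :=
      ncard_biUnion_list cs f hfin (sel_pairwise_disjoint hsel hdisj)
    have hroot' : node (Sum.inr r) cs ∉ ⋃ c ∈ cs, f c := by
      intro hmem
      obtain ⟨c, hc, htc⟩ := Set.mem_iUnion₂.mp hmem
      exact hroot (List.mem_flatten.mpr
        ⟨occs c, List.mem_map_of_mem hc, (hsel c hc).subset htc⟩)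
    have hUfin : (⋃ c ∈ cs, f c).Finite :=
      Set.Finite.biUnion cs.finite_toSet hfin
    rw [Set.ncard_insert_of_notMem hroot' hUfin, hU, wdiff_rule]
    rw [List.map_congr_left fun c hc => ih c hc (hsub c hc)]

end Aux

/-- With `R = ∅` (i.e. `k = 1`), max-weight extraction under `W_{T,∅}` yields a
longest explanation: its number of rule vertices is maximal among all
explanation trees in `T`. -/
theorem maxSel_empty_yields_longest {α : Type} (P : Set (Rule α)) (X : Set α) (p : α)
    (T : RTree (α ⊕ Rule α)) (hT : IsAOTNode P X ∅ T)
    (hroot : RTree.label T = Sum.inl p) (hnd : (RTree.occs T).Nodup)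
    (V : Set (RTree (α ⊕ Rule α))) (hV : MaxSel ∅ T V) :
    Sel T V ∧ ∀ V', Sel T V' → V'.ncard ≤ V.ncard := by
  refine ⟨maxsel_sel hV, fun V' hV' => ?_⟩
  exact (sel_ncard_le hV' hnd).trans_eq (maxsel_ncard_eq hV hnd).symm
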